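/- (Theorem 2(ii), core bound.) Let K ⊆ ℝⁿ be compact and convex, let W : ℝⁿ → ℝ be twice continuously differentiable, and let λ̲ ≤ λ̄ be real numbers such that λ̲·‖h‖² ≤ ⟨h, (∇²W(μ))·h⟩ ≤ λ̄·‖h‖² for every μ ∈ K and h ∈ ℝⁿ. Let σ' be a Borel probability measure on K and let Q be a Markov kernel from K to K such that ∫ μ dQ(μ | μ') = μ' for σ'-almost every μ' (the mean-preserving spread/Blackwell condition), and let σ be the composition measure σ(A) := ∫ Q(A | μ') dσ'(μ'). Then (λ̲/2)·( ∫ ‖μ‖² dσ(μ) − ∫ ‖μ'‖² dσ'(μ') ) ≤ ∫ W dσ − ∫ W dσ' ≤ (λ̄/2)·( ∫ ‖μ‖² dσ(μ) − ∫ ‖μ'‖² dσ'(μ') ). -/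

import Mathlib

open MeasureTheory ProbabilityTheory
open scoped RealInnerProductSpace

section slice
variable {E : Type*} [NormedAddCommGroup E] [NormedSpace ℝ E]

lemma stmt15_slice1 {g : E → ℝ} (hg : ContDiff ℝ 2 g) (x v : E) (t : ℝ) :
    HasDerivAt (fun s : ℝ => g (x + s • v)) (fderiv ℝ g (x + t • v) v) t := by
  have hL : HasDerivAt (fun s : ℝ => x + s • v) v t := by
    simpa using ((hasDerivAt_id t).smul_const v).const_add x
  exact ((hg.differentiable two_ne_zero).differentiableAt.hasFDerivAt).comp_hasDerivAt t hL

lemma stmt15_slice2 {g : E → ℝ} (hg : ContDiff ℝ 2 g) (x v : E) (t : ℝ) :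
    HasDerivAt (fun s : ℝ => fderiv ℝ g (x + s • v) v)
      (iteratedFDeriv ℝ 2 g (x + t • v) ![v, v]) t := by
  have hL : HasDerivAt (fun s : ℝ => x + s • v) v t := by
    simpa using ((hasDerivAt_id t).smul_const v).const_add x
  have hF : ContDiff ℝ 1 (fderiv ℝ g) := hg.fderiv_right (by norm_num)
  have h1 : HasDerivAt (fun s : ℝ => fderiv ℝ g (x + s • v))
      (fderiv ℝ (fderiv ℝ g) (x + t • v) v) t :=
    ((hF.differentiable one_ne_zero).differentiableAt.hasFDerivAt).comp_hasDerivAt t hL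
  have h2 := h1.clm_apply (hasDerivAt_const t v)
  simpa [iteratedFDeriv_two_apply] using h2

end slice

section convex
variable {E : Type*} [NormedAddCommGroup E] [InnerProductSpace ℝ E]

lemma stmt15_convexOn_sub_half {K : Set E} (hKconv : Convex ℝ K) {g : E → ℝ}
    (hg : ContDiff ℝ 2 g) (c : ℝ)
    (hpos : ∀ μ ∈ K, ∀ h : E, 2 * c * ‖h‖ ^ 2 ≤ iteratedFDeriv ℝ 2 g μ ![h, h]) :
    ConvexOn ℝ K (fun μ => g μ - c * ‖μ‖ ^ 2) := by
  refine ⟨hKconv, ?_⟩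
  intro x hx y hy a b ha hb hab
  set v := y - x with hv
  have key : ∀ s : ℝ, ‖x + s • v‖ ^ 2 = ‖x‖ ^ 2 + s * (2 * ⟪x, v⟫) + s ^ 2 * ‖v‖ ^ 2 := by
    intro s
    rw [norm_add_sq_real, real_inner_smul_right, norm_smul]
    simp [mul_pow, sq_abs]
    ring
  set φ : ℝ → ℝ := fun s => g (x + s • v) - c * (‖x‖ ^ 2 + s * (2 * ⟪x, v⟫) + s ^ 2 * ‖v‖ ^ 2)
    with hφdef
  have hφf : ∀ s : ℝ, φ s = g (x + s • v) - c * ‖x + s • v‖ ^ 2 := by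
    intro s; rw [hφdef]; simp only; rw [key]
  set ψ : ℝ → ℝ := fun s => fderiv ℝ g (x + s • v) v - c * (2 * ⟪x, v⟫ + s * (2 * ‖v‖ ^ 2))
    with hψdef
  have hφ' : ∀ s : ℝ, HasDerivAt φ (ψ s) s := by
    intro s
    have h1 : HasDerivAt (fun s : ℝ => s * (2 * ⟪x, v⟫)) (2 * ⟪x, v⟫) s := by
      simpa using (hasDerivAt_id s).mul_const (2 * ⟪x, v⟫)
    have h2 : HasDerivAt (fun s : ℝ => s ^ 2 * ‖v‖ ^ 2) (2 * s * ‖v‖ ^ 2) s := by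
      simpa using (hasDerivAt_pow 2 s).mul_const (‖v‖ ^ 2)
    have h3 := (((h1.const_add (‖x‖ ^ 2)).add h2).const_mul c)
    have h4 := (stmt15_slice1 hg x v s).sub h3
    refine HasDerivAt.congr_deriv h4 ?_
    simp only [hψdef]; ring
  have hψ' : ∀ s : ℝ, HasDerivAt ψ
      (iteratedFDeriv ℝ 2 g (x + s • v) ![v, v] - c * (2 * ‖v‖ ^ 2)) s := by
    intro s
    have h1 : HasDerivAt (fun s : ℝ => s * (2 * ‖v‖ ^ 2)) (2 * ‖v‖ ^ 2) s := by
      simpa using (hasDerivAt_id s).mul_const (2 * ‖v‖ ^ 2)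
    have h2 := ((h1.const_add (2 * ⟪x, v⟫)).const_mul c)
    exact (stmt15_slice2 hg x v s).sub h2
  have hdφ : Differentiable ℝ φ := fun s => (hφ' s).differentiableAt
  have hderivφ : deriv φ = ψ := funext fun s => (hφ' s).deriv
  have hmem : ∀ s ∈ Set.Icc (0:ℝ) 1, x + s • v ∈ K := by
    intro s hs
    have h := hKconv hx hy (by linarith [hs.2] : (0:ℝ) ≤ 1 - s) hs.1 (by ring)
    have : x + s • v = (1 - s) • x + s • y := by rw [hv]; module
    rw [this]; exact h
  have hconv : ConvexOn ℝ (Set.Icc (0:ℝ) 1) φ := by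
    apply convexOn_of_deriv2_nonneg (convex_Icc 0 1) hdφ.continuous.continuousOn
      hdφ.differentiableOn
    · rw [hderivφ]
      have hdψ : Differentiable ℝ ψ := fun s => (hψ' s).differentiableAt
      exact hdψ.differentiableOn
    · intro t ht
      rw [interior_Icc] at ht
      have heq : deriv (deriv φ) t
          = iteratedFDeriv ℝ 2 g (x + t • v) ![v, v] - c * (2 * ‖v‖ ^ 2) := by
        rw [hderivφ]; exact (hψ' t).deriv
      have h2 : deriv^[2] φ t = deriv (deriv φ) t := by
        simp [Function.iterate_succ_apply']
      rw [h2, heq]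
      have := hpos _ (hmem t ⟨ht.1.le, ht.2.le⟩) v
      linarith
  have h0 : φ 0 = g x - c * ‖x‖ ^ 2 := by rw [hφf 0]; simp
  have hxv : x + v = y := by rw [hv]; abel
  have h1 : φ 1 = g y - c * ‖y‖ ^ 2 := by rw [hφf 1]; rw [one_smul, hxv]
  have hineq := hconv.2 (Set.left_mem_Icc.2 zero_le_one) (Set.right_mem_Icc.2 zero_le_one)
    ha hb hab
  have hab' : a • (0:ℝ) + b • (1:ℝ) = b := by simp
  rw [hab'] at hineq
  have hxy : a • x + b • y = x + b • v := by
    have haeq : a = 1 - b := by linarith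
    rw [haeq, hv]; module
  have hφb : φ b = g (x + b • v) - c * ‖x + b • v‖ ^ 2 := hφf b
  simp only [smul_eq_mul] at hineq ⊢
  rw [hxy, ← hφb]
  rw [h0, h1] at hineq
  linarith

end convex

section meas
variable {n : ℕ} {K : Set (EuclideanSpace ℝ (Fin n))}

lemma stmt15_integrable_of_suppK (hK : IsCompact K) {ν : Measure (EuclideanSpace ℝ (Fin n))}
    [IsFiniteMeasure ν] (hν : ν Kᶜ = 0) {F : Type*} [NormedAddCommGroup F]
    {f : EuclideanSpace ℝ (Fin n) → F} (hf : Continuous f) : Integrable f ν := by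
  obtain ⟨C, hC⟩ := hK.exists_bound_of_continuousOn hf.continuousOn
  refine (integrable_const C).mono' hf.aestronglyMeasurable ?_
  have haeK : ∀ᵐ x ∂ν, x ∈ K := by rw [ae_iff]; exact hν
  filter_upwards [haeK] with x hx using hC x hx

lemma stmt15_lint_KC_zero (hKm : MeasurableSet K)
    {σ' : Measure (EuclideanSpace ℝ (Fin n))} (hσ'K : σ' Kᶜ = 0)
    {Q : Kernel (EuclideanSpace ℝ (Fin n)) (EuclideanSpace ℝ (Fin n))}
    (hQK : ∀ μ' ∈ K, Q μ' Kᶜ = 0) :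
    ∫⁻ a, Q a Kᶜ ∂σ' = 0 := by
  have haeK : ∀ᵐ x ∂σ', x ∈ K := by rw [ae_iff]; exact hσ'K
  rw [lintegral_eq_zero_iff (Q.measurable_coe hKm.compl)]
  filter_upwards [haeK] with x hx using hQK x hx

lemma stmt15_bind_eq_snd {σ' : Measure (EuclideanSpace ℝ (Fin n))} [IsProbabilityMeasure σ']
    {Q : Kernel (EuclideanSpace ℝ (Fin n)) (EuclideanSpace ℝ (Fin n))} [IsMarkovKernel Q] :
    σ'.bind (fun x => Q x) = (σ' ⊗ₘ Q).snd := by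
  ext s hs
  rw [Measure.bind_apply hs Q.measurable.aemeasurable, Measure.snd_apply hs,
    Measure.compProd_apply (measurable_snd hs)]
  rfl

lemma stmt15_bind_KC_zero (hKm : MeasurableSet K)
    {σ' : Measure (EuclideanSpace ℝ (Fin n))} [IsProbabilityMeasure σ'] (hσ'K : σ' Kᶜ = 0)
    {Q : Kernel (EuclideanSpace ℝ (Fin n)) (EuclideanSpace ℝ (Fin n))} [IsMarkovKernel Q]
    (hQK : ∀ μ' ∈ K, Q μ' Kᶜ = 0) :
    (σ'.bind (fun x => Q x)) Kᶜ = 0 := by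
  rw [Measure.bind_apply hKm.compl Q.measurable.aemeasurable]
  exact stmt15_lint_KC_zero hKm hσ'K hQK

lemma stmt15_compProd_snd_KC_zero (hKm : MeasurableSet K)
    {σ' : Measure (EuclideanSpace ℝ (Fin n))} [IsProbabilityMeasure σ'] (hσ'K : σ' Kᶜ = 0)
    {Q : Kernel (EuclideanSpace ℝ (Fin n)) (EuclideanSpace ℝ (Fin n))} [IsMarkovKernel Q]
    (hQK : ∀ μ' ∈ K, Q μ' Kᶜ = 0) :
    (σ' ⊗ₘ Q) (Prod.snd ⁻¹' Kᶜ) = 0 := by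
  rw [Measure.compProd_apply (measurable_snd hKm.compl)]
  exact stmt15_lint_KC_zero hKm hσ'K hQK

lemma stmt15_integral_bind (hK : IsCompact K)
    {σ' : Measure (EuclideanSpace ℝ (Fin n))} [IsProbabilityMeasure σ'] (hσ'K : σ' Kᶜ = 0)
    {Q : Kernel (EuclideanSpace ℝ (Fin n)) (EuclideanSpace ℝ (Fin n))} [IsMarkovKernel Q]
    (hQK : ∀ μ' ∈ K, Q μ' Kᶜ = 0)
    {f : EuclideanSpace ℝ (Fin n) → ℝ} (hf : Continuous f) :
    ∫ y, f y ∂(σ'.bind (fun x => Q x)) = ∫ x, ∫ y, f y ∂(Q x) ∂σ' := by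
  have hKm : MeasurableSet K := hK.isClosed.measurableSet
  obtain ⟨C, hC⟩ := hK.exists_bound_of_continuousOn hf.continuousOn
  have hint : Integrable (fun p : _ × _ => f p.2) (σ' ⊗ₘ Q) := by
    refine (integrable_const C).mono'
      (hf.aestronglyMeasurable.comp_measurable measurable_snd) ?_
    have hae : ∀ᵐ p : _ × _ ∂(σ' ⊗ₘ Q), p.2 ∈ K := by
      rw [ae_iff]
      exact stmt15_compProd_snd_KC_zero hKm hσ'K hQK
    filter_upwards [hae] with p hp using hC _ hp
  rw [stmt15_bind_eq_snd, Measure.snd,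
    integral_map measurable_snd.aemeasurable hf.aestronglyMeasurable,
    Measure.integral_compProd hint]

lemma stmt15_one_sided (hK : IsCompact K)
    {f : EuclideanSpace ℝ (Fin n) → ℝ} (hf : Continuous f) (hfconv : ConvexOn ℝ K f)
    {σ' : Measure (EuclideanSpace ℝ (Fin n))} [IsProbabilityMeasure σ'] (hσ'K : σ' Kᶜ = 0)
    {Q : Kernel (EuclideanSpace ℝ (Fin n)) (EuclideanSpace ℝ (Fin n))} [IsMarkovKernel Q]
    (hQK : ∀ μ' ∈ K, Q μ' Kᶜ = 0)
    (hmean : ∀ᵐ μ' ∂σ', (∫ μ, μ ∂(Q μ')) = μ') :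
    ∫ y, f y ∂σ' ≤ ∫ y, f y ∂(σ'.bind (fun x => Q x)) := by
  have hKm : MeasurableSet K := hK.isClosed.measurableSet
  have haeK : ∀ᵐ x ∂σ', x ∈ K := by rw [ae_iff]; exact hσ'K
  obtain ⟨C, hC⟩ := hK.exists_bound_of_continuousOn hf.continuousOn
  have hpt : ∀ᵐ μ' ∂σ', f μ' ≤ ∫ μ, f μ ∂(Q μ') := by
    filter_upwards [haeK, hmean] with μ' hμ'K hμ'mean
    have hQae : ∀ᵐ μ ∂(Q μ'), μ ∈ K := by rw [ae_iff]; exact hQK μ' hμ'K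
    have hidint : Integrable (fun μ => μ) (Q μ') :=
      stmt15_integrable_of_suppK hK (hQK μ' hμ'K) continuous_id
    have hfci : Integrable (f ∘ fun μ => μ) (Q μ') :=
      stmt15_integrable_of_suppK hK (hQK μ' hμ'K) hf
    have h := hfconv.map_integral_le hf.continuousOn hK.isClosed hQae hidint hfci
    rwa [hμ'mean] at h
  have hint1 : Integrable f σ' := stmt15_integrable_of_suppK hK hσ'K hf
  have hmeas2 : StronglyMeasurable fun x => ∫ y, f y ∂(Q x) :=
    StronglyMeasurable.integral_kernel_prod_right (κ := Q) (f := fun _ y => f y)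
      (hf.stronglyMeasurable.comp_measurable measurable_snd)
  have hint2 : Integrable (fun x => ∫ y, f y ∂(Q x)) σ' := by
    refine (integrable_const C).mono' hmeas2.aestronglyMeasurable ?_
    filter_upwards [haeK] with μ' hμ'
    have hQae : ∀ᵐ μ ∂(Q μ'), μ ∈ K := by rw [ae_iff]; exact hQK μ' hμ'
    calc ‖∫ y, f y ∂(Q μ')‖ ≤ ∫ _, C ∂(Q μ') := by
          refine norm_integral_le_of_norm_le (integrable_const C) ?_
          filter_upwards [hQae] with y hy using hC y hy
      _ = C := by simp
  calc ∫ y, f y ∂σ' ≤ ∫ x, ∫ y, f y ∂(Q x) ∂σ' := integral_mono_ae hint1 hint2 hpt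
    _ = ∫ y, f y ∂(σ'.bind (fun x => Q x)) :=
      (stmt15_integral_bind hK hσ'K hQK hf).symm

end meas

/-- (Theorem 2(ii), core bound.) If the Hessian quadratic form of `W` is
bounded between `λ̲‖h‖²` and `λ̄‖h‖²` on a compact convex `K`, `σ'` is a probability measure
on `K`, `Q` a Markov kernel from `K` to `K` with `∫ μ dQ(μ|μ') = μ'` for `σ'`-a.e. `μ'`, and
`σ = σ'.bind Q`, then
`(λ̲/2)(∫‖μ‖²dσ − ∫‖μ‖²dσ') ≤ ∫W dσ − ∫W dσ' ≤ (λ̄/2)(∫‖μ‖²dσ − ∫‖μ‖²dσ')`. -/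
theorem stmt_15 (n : ℕ) (K : Set (EuclideanSpace ℝ (Fin n)))
    (hK : IsCompact K) (hKconv : Convex ℝ K)
    (W : EuclideanSpace ℝ (Fin n) → ℝ) (hW : ContDiff ℝ 2 W)
    (lam_lo lam_hi : ℝ) (hlam : lam_lo ≤ lam_hi)
    (hHess : ∀ μ ∈ K, ∀ h : EuclideanSpace ℝ (Fin n),
      lam_lo * ‖h‖ ^ 2 ≤ iteratedFDeriv ℝ 2 W μ ![h, h] ∧
        iteratedFDeriv ℝ 2 W μ ![h, h] ≤ lam_hi * ‖h‖ ^ 2)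
    (σ' : Measure (EuclideanSpace ℝ (Fin n))) [IsProbabilityMeasure σ']
    (hσ'K : σ' Kᶜ = 0)
    (Q : Kernel (EuclideanSpace ℝ (Fin n)) (EuclideanSpace ℝ (Fin n))) [IsMarkovKernel Q]
    (hQK : ∀ μ' ∈ K, Q μ' Kᶜ = 0)
    (hmean : ∀ᵐ μ' ∂σ', (∫ μ, μ ∂(Q μ')) = μ')
    (σ : Measure (EuclideanSpace ℝ (Fin n)))
    (hσ : σ = σ'.bind (fun x => Q x)) :
    lam_lo / 2 * ((∫ μ, ‖μ‖ ^ 2 ∂σ) - ∫ μ, ‖μ‖ ^ 2 ∂σ') ≤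
        (∫ μ, W μ ∂σ) - ∫ μ, W μ ∂σ' ∧
      (∫ μ, W μ ∂σ) - ∫ μ, W μ ∂σ' ≤
        lam_hi / 2 * ((∫ μ, ‖μ‖ ^ 2 ∂σ) - ∫ μ, ‖μ‖ ^ 2 ∂σ') := by
  subst hσ
  have hKm : MeasurableSet K := hK.isClosed.measurableSet
  have hσK : (σ'.bind (fun x => Q x)) Kᶜ = 0 := stmt15_bind_KC_zero hKm hσ'K hQK
  have instσ : IsProbabilityMeasure (σ'.bind (fun x => Q x)) := by
    rw [stmt15_bind_eq_snd]; infer_instance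
  have contN : Continuous (fun μ : EuclideanSpace ℝ (Fin n) => ‖μ‖ ^ 2) :=
    continuous_norm.pow 2
  have IW' : Integrable W σ' := stmt15_integrable_of_suppK hK hσ'K hW.continuous
  have IWσ : Integrable W (σ'.bind (fun x => Q x)) :=
    stmt15_integrable_of_suppK hK hσK hW.continuous
  have IN' : Integrable (fun μ => ‖μ‖ ^ 2) σ' := stmt15_integrable_of_suppK hK hσ'K contN
  have INσ : Integrable (fun μ => ‖μ‖ ^ 2) (σ'.bind (fun x => Q x)) :=
    stmt15_integrable_of_suppK hK hσK contN
  -- lower bound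
  have conv₁ : ConvexOn ℝ K (fun μ => W μ - lam_lo / 2 * ‖μ‖ ^ 2) := by
    refine stmt15_convexOn_sub_half hKconv hW (lam_lo / 2) ?_
    intro μ hμ h
    have := (hHess μ hμ h).1
    linarith
  have cont₁ : Continuous (fun μ : EuclideanSpace ℝ (Fin n) => W μ - lam_lo / 2 * ‖μ‖ ^ 2) :=
    hW.continuous.sub (continuous_const.mul contN)
  have h₁ := stmt15_one_sided hK cont₁ conv₁ hσ'K hQK hmean
  -- upper bound
  have conv₂ : ConvexOn ℝ K (fun μ => lam_hi / 2 * ‖μ‖ ^ 2 - W μ) := by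
    have h := stmt15_convexOn_sub_half hKconv hW.neg (-(lam_hi / 2)) ?_
    · have heq : (fun μ : EuclideanSpace ℝ (Fin n) => -W μ - -(lam_hi / 2) * ‖μ‖ ^ 2)
          = fun μ => lam_hi / 2 * ‖μ‖ ^ 2 - W μ := by
        funext μ; ring
      rwa [heq] at h
    · intro μ hμ h
      have h2 := (hHess μ hμ h).2
      have hneg : iteratedFDeriv ℝ 2 (fun μ => -W μ) μ ![h, h]
          = -(iteratedFDeriv ℝ 2 W μ ![h, h]) := by
        rw [show (fun μ => -W μ) = -W from rfl, iteratedFDeriv_neg_apply]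
        simp
      rw [hneg]
      linarith
  have cont₂ : Continuous (fun μ : EuclideanSpace ℝ (Fin n) => lam_hi / 2 * ‖μ‖ ^ 2 - W μ) :=
    (continuous_const.mul contN).sub hW.continuous
  have h₂ := stmt15_one_sided hK cont₂ conv₂ hσ'K hQK hmean
  -- expand integrals
  have e₁ : ∀ (ν : Measure (EuclideanSpace ℝ (Fin n))), Integrable W ν →
      Integrable (fun μ => ‖μ‖ ^ 2) ν →
      ∫ μ, (W μ - lam_lo / 2 * ‖μ‖ ^ 2) ∂ν = (∫ μ, W μ ∂ν) - lam_lo / 2 * ∫ μ, ‖μ‖ ^ 2 ∂ν := by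
    intro ν hW' hN'
    rw [integral_sub hW' (hN'.const_mul _), integral_const_mul]
  have e₂ : ∀ (ν : Measure (EuclideanSpace ℝ (Fin n))), Integrable W ν →
      Integrable (fun μ => ‖μ‖ ^ 2) ν →
      ∫ μ, (lam_hi / 2 * ‖μ‖ ^ 2 - W μ) ∂ν = lam_hi / 2 * (∫ μ, ‖μ‖ ^ 2 ∂ν) - ∫ μ, W μ ∂ν := by
    intro ν hW' hN'
    rw [integral_sub (hN'.const_mul _) hW', integral_const_mul]
  rw [e₁ _ IW' IN', e₁ _ IWσ INσ] at h₁
  rw [e₂ _ IW' IN', e₂ _ IWσ INσ] at h₂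
  constructor <;> linarith
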